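/- Let a ∈ (0,1), m ∈ [0,1], ρ > 0, ρ ≠ 1, and set d := [(a+m)(ρ−1)+1]² − 4·a·m·ρ·(ρ−1). Define u := ((a+m)(ρ−1)+1 − √d) / (2a(ρ−1)) and v := ((m−a)(ρ−1)−1 + √d) / (2(1−a)(ρ−1)). Then u ∈ [0,1], v ∈ [0,1], a·u + (1−a)·v = m, and (u(1−v))/(v(1−u)) = ρ (whenever the denominators are nonzero). -/

import Mathlib

set_option maxHeartbeats 1600000

private lemma aux_le_of_sq_le_sq (x s : ℝ) (hs : 0 ≤ s) (h : x^2 ≤ s^2) : x ≤ s := by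
  nlinarith

theorem stmt1 (a m ρ : ℝ) (ha : a ∈ Set.Ioo (0:ℝ) 1) (hm : m ∈ Set.Icc (0:ℝ) 1)
    (hρ : 0 < ρ) (hρ1 : ρ ≠ 1) :
    let d := ((a + m) * (ρ - 1) + 1)^2 - 4 * a * m * ρ * (ρ - 1)
    let u := ((a + m) * (ρ - 1) + 1 - Real.sqrt d) / (2 * a * (ρ - 1))
    let v := ((m - a) * (ρ - 1) - 1 + Real.sqrt d) / (2 * (1 - a) * (ρ - 1))
    u ∈ Set.Icc (0:ℝ) 1 ∧ v ∈ Set.Icc (0:ℝ) 1 ∧ a * u + (1 - a) * v = m ∧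
      (v * (1 - u) ≠ 0 → (u * (1 - v)) / (v * (1 - u)) = ρ) := by
  obtain ⟨ha0, ha1⟩ := ha
  obtain ⟨hm0, hm1⟩ := hm
  intro d u v
  have hd : d = ((a + m) * (ρ - 1) + 1)^2 - 4 * a * m * ρ * (ρ - 1) := rfl
  have hu : u = ((a + m) * (ρ - 1) + 1 - Real.sqrt d) / (2 * a * (ρ - 1)) := rfl
  have hv : v = ((m - a) * (ρ - 1) - 1 + Real.sqrt d) / (2 * (1 - a) * (ρ - 1)) := rfl
  have h1a : 0 < 1 - a := by linarith
  have ht : ρ - 1 ≠ 0 := sub_ne_zero.mpr hρ1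
  have hd0 : 0 ≤ d := by
    rw [hd]
    rcases ht.lt_or_gt with h | h
    · nlinarith [mul_nonneg (mul_nonneg ha0.le hm0) hρ.le,
        sq_nonneg ((a + m) * (ρ - 1) + 1)]
    · nlinarith [sq_nonneg ((ρ - 1) * (a - m)),
        mul_nonneg (mul_nonneg h.le ha0.le) (by linarith : (0:ℝ) ≤ 1 - m),
        mul_nonneg (mul_nonneg h.le hm0) h1a.le]
  set s := Real.sqrt d with hsdef
  have hs0 : 0 ≤ s := Real.sqrt_nonneg d
  have hs2 : s ^ 2 = ((a + m) * (ρ - 1) + 1)^2 - 4 * a * m * ρ * (ρ - 1) := by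
    rw [hsdef, Real.sq_sqrt hd0, hd]
  have hmix : a * u + (1 - a) * v = m := by
    rw [hu, hv]; field_simp; ring
  refine ⟨?_, ?_, hmix, ?_⟩
  · -- u ∈ [0,1]
    rcases ht.lt_or_gt with hlt | hgt
    · have hden : 2 * a * (ρ - 1) < 0 := mul_neg_of_pos_of_neg (by linarith) hlt
      constructor
      · rw [hu, le_div_iff_of_neg hden]
        have : (a + m) * (ρ - 1) + 1 ≤ s := by
          apply aux_le_of_sq_le_sq _ _ hs0
          nlinarith [mul_nonneg (mul_nonneg ha0.le hm0) hρ.le]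
        linarith
      · rw [hu, div_le_iff_of_neg hden]
        have hP : 0 < (m - a) * (ρ - 1) + 1 := by
          nlinarith [mul_nonneg hρ.le hm0, mul_nonneg ha0.le (by linarith : (0:ℝ) ≤ 1 - ρ)]
        have : s ≤ (m - a) * (ρ - 1) + 1 := by
          apply aux_le_of_sq_le_sq _ _ hP.le
          nlinarith [mul_nonneg (mul_nonneg ha0.le (by linarith : (0:ℝ) ≤ 1 - m)) (by linarith : (0:ℝ) ≤ 1 - ρ)]
        nlinarith
    · have hden : 0 < 2 * a * (ρ - 1) := by positivity
      constructor
      · rw [hu, le_div_iff₀ hden]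
        have : s ≤ (a + m) * (ρ - 1) + 1 := by
          apply aux_le_of_sq_le_sq _ _ (by nlinarith : (0:ℝ) ≤ (a + m) * (ρ - 1) + 1)
          nlinarith [mul_nonneg (mul_nonneg ha0.le hm0) hρ.le]
        linarith
      · rw [hu, div_le_iff₀ hden]
        have : (m - a) * (ρ - 1) + 1 ≤ s := by
          apply aux_le_of_sq_le_sq _ _ hs0
          nlinarith [mul_nonneg (mul_nonneg ha0.le (by linarith : (0:ℝ) ≤ 1 - m)) hgt.le]
        nlinarith
  · -- v ∈ [0,1]
    rcases ht.lt_or_gt with hlt | hgt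
    · have hden : 2 * (1 - a) * (ρ - 1) < 0 := mul_neg_of_pos_of_neg (by linarith) hlt
      constructor
      · rw [hv, le_div_iff_of_neg hden]
        have hN : 0 < (a - m) * (ρ - 1) + 1 := by
          nlinarith [mul_pos hρ ha0, mul_nonneg (by linarith : (0:ℝ) ≤ 1 - ρ) hm0]
        have : s ≤ (a - m) * (ρ - 1) + 1 := by
          apply aux_le_of_sq_le_sq _ _ hN.le
          nlinarith [mul_nonneg (mul_nonneg hm0 h1a.le) (by linarith : (0:ℝ) ≤ 1 - ρ)]
        linarith
      · rw [hv, div_le_iff_of_neg hden]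
        have : (2 - a - m) * (ρ - 1) + 1 ≤ s := by
          apply aux_le_of_sq_le_sq _ _ hs0
          nlinarith [mul_nonneg (mul_nonneg (mul_nonneg h1a.le (by linarith : (0:ℝ) ≤ 1 - m)) hρ.le) (by linarith : (0:ℝ) ≤ 1 - ρ)]
        nlinarith
    · have hden : 0 < 2 * (1 - a) * (ρ - 1) := by positivity
      constructor
      · rw [hv, le_div_iff₀ hden]
        have : (a - m) * (ρ - 1) + 1 ≤ s := by
          apply aux_le_of_sq_le_sq _ _ hs0
          nlinarith [mul_nonneg (mul_nonneg hm0 h1a.le) hgt.le]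
        linarith
      · rw [hv, div_le_iff₀ hden]
        have : s ≤ (2 - a - m) * (ρ - 1) + 1 := by
          apply aux_le_of_sq_le_sq _ _ (by nlinarith : (0:ℝ) ≤ (2 - a - m) * (ρ - 1) + 1)
          nlinarith [mul_nonneg (mul_nonneg (mul_nonneg h1a.le (by linarith : (0:ℝ) ≤ 1 - m)) hρ.le) hgt.le]
        nlinarith
  · intro hvu
    rw [div_eq_iff hvu, hu, hv]
    field_simp
    linear_combination (1-ρ) * hs2
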